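/- Let G be a group that is also a smooth manifold with smooth multiplication and inversion (a Lie group), and let F : Λ → G be a function on Λ = {x ∈ ℝⁿ : xᵢ = 0 for some i} that is smooth on each coordinate hyperplane. If G is abelian, then the map F̃ : ℝⁿ → G defined by F̃(x) = Σ_{k=0}^{n-1} Σ_{1 ≤ i₁ < ⋯ < i_k ≤ n} (-1)^{n-k+1} F(P_{i₁,…,i_k}(x)) (sum in the group G, written additively) is smooth and restricts to F on Λ, where P_{i₁,…,i_k} : ℝⁿ → Λ is the orthogonal projection killing all coordinates outside {i₁,…,i_k}. -/

import Mathlib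

open scoped Manifold

theorem stmt_16 (n : ℕ) (hn : 1 ≤ n)
    {E : Type*} [NormedAddCommGroup E] [NormedSpace ℝ E]
    {H : Type*} [TopologicalSpace H] (I : ModelWithCorners ℝ E H)
    {G : Type*} [AddCommGroup G] [TopologicalSpace G] [ChartedSpace H G]
    [LieAddGroup I (⊤ : ℕ∞) G]
    (F : (Fin n → ℝ) → G)
    (hF : ∀ i : Fin n,
      ContMDiff 𝓘(ℝ, Fin n → ℝ) I (⊤ : ℕ∞) (fun x => F (Function.update x i 0))) :
    ContMDiff 𝓘(ℝ, Fin n → ℝ) I (⊤ : ℕ∞)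
      (fun x : Fin n → ℝ =>
        ∑ s ∈ Finset.univ.filter (fun s : Finset (Fin n) => s.card < n),
          ((-1 : ℤ) ^ (n - s.card + 1)) •
            F (fun j => if j ∈ s then x j else 0)) ∧
    ∀ x : Fin n → ℝ, (∃ i, x i = 0) →
      (∑ s ∈ Finset.univ.filter (fun s : Finset (Fin n) => s.card < n),
          ((-1 : ℤ) ^ (n - s.card + 1)) •
            F (fun j => if j ∈ s then x j else 0)) = F x := by
  classical
  have hpow : ∀ k : ℕ, k ≤ n → ((-1 : ℤ)) ^ (n - k + 1) = (-1) ^ (n + 1) * (-1) ^ k := by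
    intro k hk
    have h1 : (n + 1) + k = (n - k + 1) + 2 * k := by omega
    calc ((-1 : ℤ)) ^ (n - k + 1)
        = (-1) ^ (n - k + 1) * ((-1) ^ 2) ^ k := by norm_num
      _ = (-1) ^ ((n - k + 1) + 2 * k) := by rw [← pow_mul, ← pow_add]
      _ = (-1) ^ ((n + 1) + k) := by rw [h1]
      _ = (-1) ^ (n + 1) * (-1) ^ k := by rw [pow_add]
  constructor
  · apply contMDiff_finset_sum
    intro s hs
    rw [Finset.mem_filter] at hs
    obtain ⟨i, hi⟩ : ∃ i : Fin n, i ∉ s := by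
      by_contra h
      push_neg at h
      have : s = Finset.univ := Finset.eq_univ_iff_forall.2 h
      rw [this, Finset.card_univ, Fintype.card_fin] at hs
      exact lt_irrefl n hs.2
    have hP : ContMDiff 𝓘(ℝ, Fin n → ℝ) 𝓘(ℝ, Fin n → ℝ) (⊤ : ℕ∞)
        (fun x : Fin n → ℝ => fun j => if j ∈ s then x j else 0) := by
      rw [contMDiff_iff_contDiff]
      apply contDiff_pi.2
      intro j
      by_cases hj : j ∈ s
      · simp only [if_pos hj]
        exact (ContinuousLinearMap.proj j : (Fin n → ℝ) →L[ℝ] ℝ).contDiff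
      · simp only [if_neg hj]
        exact contDiff_const
    have hcomp := (hF i).comp hP
    have heq : ∀ x : Fin n → ℝ,
        Function.update (fun j => if j ∈ s then x j else 0) i 0
          = fun j => if j ∈ s then x j else 0 := by
      intro x; funext j
      rcases eq_or_ne j i with rfl | hj
      · simp [hi]
      · simp [Function.update_of_ne hj]
    simp only [Function.comp_def, heq] at hcomp
    rcases Nat.even_or_odd (n - s.card + 1) with h | h
    · simpa [h.neg_one_pow, one_zsmul] using hcomp
    · simpa [h.neg_one_pow, neg_one_zsmul] using hcomp.neg
  · rintro x ⟨i, hxi⟩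
    set S : Finset (Fin n) := Finset.univ.filter (fun j => x j ≠ 0) with hS
    have hiS : i ∉ S := by simp [hS, hxi]
    have hmemS : ∀ j : Fin n, j ∉ S → x j = 0 := by
      intro j hj
      by_contra h
      exact hj (by simp [hS, h])
    have hPx : ∀ s : Finset (Fin n), (fun j => if j ∈ s then x j else 0)
        = fun j => if j ∈ s ∩ S then x j else 0 := by
      intro s; funext j
      by_cases hj : j ∈ s
      · by_cases hjS : j ∈ S
        · simp [hj, hjS]
        · simp [hj, hjS, hmemS j hjS]
      · simp [hj]
    have hPS : (fun j => if j ∈ S then x j else 0) = x := by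
      funext j
      by_cases hjS : j ∈ S
      · simp [hjS]
      · simp [hjS, (hmemS j hjS).symm]
    have key : ∑ s ∈ (Finset.univ : Finset (Finset (Fin n))),
        ((-1 : ℤ) ^ (n - s.card + 1)) • F (fun j => if j ∈ s then x j else 0) = 0 := by
      have hcompl : i ∈ Sᶜ := Finset.mem_compl.2 hiS
      have step : ∑ s ∈ (Finset.univ : Finset (Finset (Fin n))),
          ((-1 : ℤ) ^ (n - s.card + 1)) • F (fun j => if j ∈ s then x j else 0)
          = ∑ p ∈ S.powerset ×ˢ Sᶜ.powerset,
              (((-1 : ℤ) ^ (n + 1) * (-1) ^ p.1.card) * (-1) ^ p.2.card) •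
                F (fun j => if j ∈ p.1 then x j else 0) := by
        apply Finset.sum_nbij' (i := fun s => (s ∩ S, s \ S))
          (j := fun p => p.1 ∪ p.2)
        · intro s _
          refine Finset.mem_product.2 ⟨Finset.mem_powerset.2 Finset.inter_subset_right, ?_⟩
          refine Finset.mem_powerset.2 (fun j hj => ?_)
          exact Finset.mem_compl.2 (Finset.mem_sdiff.1 hj).2
        · intro p _; exact Finset.mem_univ _
        · intro s _
          ext j
          simp only [Finset.mem_union, Finset.mem_inter, Finset.mem_sdiff]
          tauto
        · intro p hp
          obtain ⟨h1, h2⟩ := Finset.mem_product.1 hp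
          rw [Finset.mem_powerset] at h1 h2
          have hd : ∀ j, j ∈ p.2 → j ∉ S := fun j hj => Finset.mem_compl.1 (h2 hj)
          ext1
          · ext j
            simp only [Finset.mem_inter, Finset.mem_union]
            constructor
            · rintro ⟨hj1 | hj2, hjS⟩
              · exact hj1
              · exact absurd hjS (hd j hj2)
            · intro hj; exact ⟨Or.inl hj, h1 hj⟩
          · ext j
            simp only [Finset.mem_sdiff, Finset.mem_union]
            constructor
            · rintro ⟨hj1 | hj2, hjS⟩
              · exact absurd (h1 hj1) hjS
              · exact hj2
            · intro hj; exact ⟨Or.inr hj, hd j hj⟩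
        · intro s _
          have hcard : s.card = (s ∩ S).card + (s \ S).card :=
            (Finset.card_inter_add_card_sdiff s S).symm
          rw [hPx s, hpow s.card (by
            simpa using Finset.card_le_card (Finset.subset_univ s))]
          congr 1
          rw [hcard, pow_add]
          ring
      rw [step, Finset.sum_product]
      apply Finset.sum_eq_zero
      intro t _
      dsimp only
      rw [show (∑ y ∈ Sᶜ.powerset, ((-1 : ℤ) ^ (n + 1) * (-1) ^ t.card * (-1) ^ y.card) •
          F (fun j => if j ∈ t then x j else 0)) = (∑ y ∈ Sᶜ.powerset,
          ((-1 : ℤ) ^ (n + 1) * (-1) ^ t.card * (-1) ^ y.card)) •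
          F (fun j => if j ∈ t then x j else 0) from Finset.sum_smul.symm]
      rw [← Finset.mul_sum,
        Finset.sum_powerset_neg_one_pow_card_of_nonempty ⟨i, hcompl⟩, mul_zero, zero_smul]
    have hfil : Finset.univ.filter (fun s : Finset (Fin n) => s.card < n)
        = (Finset.univ : Finset (Finset (Fin n))).erase Finset.univ := by
      ext s
      simp only [Finset.mem_filter, Finset.mem_univ, true_and, Finset.mem_erase, and_true]
      rw [← Finset.card_lt_iff_ne_univ, Fintype.card_fin]
    have hera := Finset.sum_erase_add (Finset.univ : Finset (Finset (Fin n)))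
      (fun s => ((-1 : ℤ) ^ (n - s.card + 1)) • F (fun j => if j ∈ s then x j else 0))
      (Finset.mem_univ Finset.univ)
    beta_reduce at hera
    rw [key] at hera
    have huniv : ((-1 : ℤ) ^ (n - (Finset.univ : Finset (Fin n)).card + 1)) •
        F (fun j => if j ∈ (Finset.univ : Finset (Fin n)) then x j else 0) = -F x := by
      have : (fun j => if j ∈ (Finset.univ : Finset (Fin n)) then x j else 0) = x := by
        funext j; simp
      rw [this, Finset.card_univ, Fintype.card_fin, Nat.sub_self, pow_one, neg_one_zsmul]
    rw [hfil]
    rw [huniv] at hera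
    exact add_neg_eq_zero.1 hera
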